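/- arXiv:1203.6559 — 6 statements merged into one kernel-verified Lean document; each statement's English description precedes it below -/
import Mathlib

section
/- In the abstract Mahjong Solitaire model, if the layout consists only of isolated stacks of height one or two, and every group has exactly four tiles, then no blocked cycle is present. -/
/-- A board is a finite multiset of isolated stacks; each stack is a list of
tile groups, with the head of the list being the top tile of the stack. -/
abbrev Board (G : Type*) := Multiset (List G)

variable {G : Type*} [DecidableEq G]

/-- The number of tiles of group `g` remaining on the board. -/
def tileCount (B : Board G) (g : G) : ℕ := (B.map (fun s => s.count g)).sum

/-- The total number of tiles on the board. -/
def totalTiles (B : Board G) : ℕ := (B.map List.length).sum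

/-- The board obtained by removing the (playable) top tiles of stacks `s₁` and
`s₂`, the remaining stacks being `rest`; emptied stacks disappear. -/
def play (s₁ s₂ : List G) (rest : Board G) : Board G :=
  Multiset.filter (fun s => s ≠ []) (s₁.tail ::ₘ s₂.tail ::ₘ rest)

/-- A legal move: remove two playable (top) tiles of the same group. -/
def Move (B B' : Board G) : Prop :=
  ∃ (g : G) (s₁ s₂ : List G) (rest : Board G),
    B = s₁ ::ₘ s₂ ::ₘ rest ∧ s₁.head? = some g ∧ s₂.head? = some g ∧
    B' = play s₁ s₂ rest

/-- A board is solvable iff some sequence of legal moves empties it. -/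
def Solvable (B : Board G) : Prop := Relation.ReflTransGen Move B 0

/-- All stacks are nonempty and of height at most two. -/
def HeightsOK (B : Board G) : Prop := ∀ s ∈ B, s ≠ [] ∧ s.length ≤ 2

/-- A blocked cycle: distinct groups `p 0, …, p k`, each with exactly two
remaining tiles, such that for each `i` there is a height-two stack with a
`p (i+1)`-tile (cyclically) on top of a `p i`-tile. -/
def BlockedCycle (B : Board G) {k : ℕ} (p : Fin (k + 1) → G) : Prop :=
  Function.Injective p ∧ (∀ i, tileCount B (p i) = 2) ∧
    ∀ i, [p (i + 1), p i] ∈ B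

/-- The board contains some blocked cycle. -/
def HasBlockedCycle (B : Board G) : Prop :=
  ∃ (k : ℕ) (p : Fin (k + 1) → G), BlockedCycle B p

/-- if the layout consists only of isolated stacks of height one
or two and every group (with tiles on the board) has exactly four tiles, then
no blocked cycle is present. -/
theorem stmt0 (B : Board G) (hH : HeightsOK B)
    (h4 : ∀ g : G, tileCount B g ≠ 0 → tileCount B g = 4) :
    ¬ HasBlockedCycle B := by
  rintro ⟨k, p, hinj, hcnt, hmem⟩
  have hst := hmem 0
  have hpos : tileCount B (p 0) ≠ 0 := by
    intro h0
    have : ([p (0 + 1), p 0].count (p 0)) ≤ tileCount B (p 0) :=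
      Multiset.le_sum_of_mem (Multiset.mem_map_of_mem _ hst)
    have h2 : List.count (p 0) [p (0 + 1), p 0] ≤ 0 := le_trans this (le_of_eq h0)
    simp [List.count_cons] at h2
  have := h4 _ hpos
  rw [hcnt 0] at this
  omega
end

section
/- If a blocked cycle is present on a board consisting only of isolated stacks of heights one and two, then the board is unsolvable: no sequence of legal moves (each move removing two playable tiles of the same group) can remove all tiles. -/
variable {G : Type*} [DecidableEq G]

lemma tileCount_cons (s : List G) (B : Board G) (g : G) :
    tileCount (s ::ₘ B) g = s.count g + tileCount B g := by
  simp [tileCount]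

lemma tileCount_filter (B : Board G) (g : G) :
    tileCount (Multiset.filter (fun s => s ≠ []) B) g = tileCount B g := by
  induction B using Multiset.induction with
  | empty => simp
  | cons a B ih =>
    by_cases h : a = []
    · subst h
      simp [Multiset.filter_cons, tileCount_cons, ih]
    · simp [Multiset.filter_cons, h, tileCount_cons, ih]

lemma count_le_tileCount {t : List G} {B : Board G} (h : t ∈ B) (g : G) :
    t.count g ≤ tileCount B g := by
  obtain ⟨B', rfl⟩ := Multiset.exists_cons_of_mem h
  simp [tileCount_cons]

lemma head_cons_of_head? {s : List G} {g : G} (h : s.head? = some g) :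
    s = g :: s.tail := by
  cases s with
  | nil => simp at h
  | cons a t => simp_all

lemma move_preserves {B B' : Board G} (hH : HeightsOK B) {k : ℕ}
    {p : Fin (k + 1) → G} (hc : BlockedCycle B p) (hm : Move B B') :
    HeightsOK B' ∧ BlockedCycle B' p := by
  obtain ⟨g, s₁, s₂, rest, hB, h1, h2, hB'⟩ := hm
  obtain ⟨hinj, hcount, hmem⟩ := hc
  have hs1 : s₁ = g :: s₁.tail := head_cons_of_head? h1
  have hs2 : s₂ = g :: s₂.tail := head_cons_of_head? h2
  -- g is not one of the cycle groups
  have hg : ∀ j, g ≠ p j := by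
    intro j hgj
    have ht : [p (j + 1), p j] ∈ B := hmem j
    have hc1 : (1 : ℕ) ≤ s₁.count (p j) := by
      rw [hs1, hgj]; simp [List.count_cons]
    have hc2 : (1 : ℕ) ≤ s₂.count (p j) := by
      rw [hs2, hgj]; simp [List.count_cons]
    have hcnt : tileCount B (p j) = s₁.count (p j) + s₂.count (p j) + tileCount rest (p j) := by
      rw [hB]; simp [tileCount_cons]; ring
    rw [hB] at ht
    have hcj := hcount j
    rcases Multiset.mem_cons.1 ht with h | ht
    · -- t = s₁, so head p (j+1) = g = p j ⇒ j+1 = j ⇒ t = [p j, p j]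
      have heq : p (j + 1) = g := by rw [← h] at h1; simpa using h1
      have hjj : j + 1 = j := hinj (heq.trans hgj)
      have hcc : s₁.count (p j) = 2 := by
        rw [← h, hjj]; simp
      omega
    rcases Multiset.mem_cons.1 ht with h | ht
    · have heq : p (j + 1) = g := by rw [← h] at h2; simpa using h2
      have hjj : j + 1 = j := hinj (heq.trans hgj)
      have hcc : s₂.count (p j) = 2 := by
        rw [← h, hjj]; simp
      omega
    · have hle := count_le_tileCount ht (p j)
      have hc3 : 1 ≤ List.count (p j) [p (j + 1), p j] := by simp [List.count_cons]
      omega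
  have hcycle_rest : ∀ i, [p (i + 1), p i] ∈ rest := by
    intro i
    have ht : [p (i + 1), p i] ∈ B := hmem i
    rw [hB] at ht
    rcases Multiset.mem_cons.1 ht with h | ht
    · exfalso
      have heq : p (i + 1) = g := by rw [← h] at h1; simpa using h1
      exact hg (i + 1) heq.symm
    rcases Multiset.mem_cons.1 ht with h | ht
    · exfalso
      have heq : p (i + 1) = g := by rw [← h] at h2; simpa using h2
      exact hg (i + 1) heq.symm
    · exact ht
  have hs1B : s₁ ∈ B := by rw [hB]; simp
  have hs2B : s₂ ∈ B := by rw [hB]; simp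
  constructor
  · -- HeightsOK B'
    intro s hs
    rw [hB'] at hs
    rw [play, Multiset.mem_filter] at hs
    obtain ⟨hs, hne⟩ := hs
    refine ⟨hne, ?_⟩
    rcases Multiset.mem_cons.1 hs with h | hs
    · subst h
      have := (hH s₁ hs1B).2
      have := List.length_tail (l := s₁)
      omega
    rcases Multiset.mem_cons.1 hs with h | hs
    · subst h
      have := (hH s₂ hs2B).2
      have := List.length_tail (l := s₂)
      omega
    · exact (hH s (by rw [hB]; simp [hs])).2
  refine ⟨hinj, ?_, ?_⟩
  · intro i
    have hc1 : s₁.tail.count (p i) = s₁.count (p i) := by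
      conv_rhs => rw [hs1]
      simp [List.count_cons, hg i]
    have hc2 : s₂.tail.count (p i) = s₂.count (p i) := by
      conv_rhs => rw [hs2]
      simp [List.count_cons, hg i]
    have : tileCount B' (p i) = tileCount B (p i) := by
      rw [hB', play, tileCount_filter, hB]
      simp [tileCount_cons, hc1, hc2]
    rw [this]; exact hcount i
  · intro i
    rw [hB', play, Multiset.mem_filter]
    exact ⟨Multiset.mem_cons_of_mem (Multiset.mem_cons_of_mem (hcycle_rest i)), by simp⟩

lemma aux_unsolvable {k : ℕ} (p : Fin (k + 1) → G) :
    ∀ B : Board G, Solvable B → HeightsOK B → BlockedCycle B p → False := by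
  intro B hs
  induction hs using Relation.ReflTransGen.head_induction_on with
  | refl =>
    intro _ hc
    have := hc.2.1 0
    simp [tileCount] at this
  | head hmove _ ih =>
    intro hH hc
    obtain ⟨h1, h2⟩ := move_preserves hH hc hmove
    exact ih h1 h2

/-- a board of isolated stacks of heights one and two containing a
blocked cycle is unsolvable. -/
theorem stmt1 (B : Board G) (hH : HeightsOK B)
    (hc : HasBlockedCycle B) : ¬ Solvable B := by
  intro hs
  obtain ⟨k, p, hc⟩ := hc
  exact aux_unsolvable p B hs hH hc
end

section
/- On a nonempty board of isolated stacks of heights one and two where every group has two or four tiles, if no match is available (no two playable tiles share a group), then every stack has height exactly two and every group has exactly two tiles. -/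
variable {G : Type*} [DecidableEq G]

private lemma sum_eq_two_mul_aux (m : Multiset ℕ) (h : ∀ x ∈ m, x ≤ 2)
    (he : m.sum = 2 * Multiset.card m) : ∀ x ∈ m, x = 2 := by
  induction m using Multiset.induction with
  | empty => simp
  | cons a t ih =>
    have ht : t.sum ≤ Multiset.card t • 2 :=
      Multiset.sum_le_card_nsmul t 2 (fun x hx => h x (Multiset.mem_cons_of_mem hx))
    have ha : a ≤ 2 := h a (Multiset.mem_cons_self a t)
    rw [Multiset.sum_cons, Multiset.card_cons] at he
    have h2 : a = 2 ∧ t.sum = 2 * Multiset.card t := by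
      simp only [smul_eq_mul] at ht; omega
    intro x hx
    rcases Multiset.mem_cons.mp hx with rfl | hx
    · exact h2.1
    · exact ih (fun y hy => h y (Multiset.mem_cons_of_mem hy)) h2.2 x hx

/-- on a nonempty board of stacks of heights one and two with all
groups of size two or four, if no match is available then every stack has
height exactly two and every present group has exactly two tiles. -/
theorem stmt4 (B : Board G) (hne : B ≠ 0) (hH : HeightsOK B)
    (hs : ∀ g : G, tileCount B g = 0 ∨ tileCount B g = 2 ∨ tileCount B g = 4)
    (hnm : ¬ ∃ (g : G) (s₁ s₂ : List G) (rest : Board G),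
      B = s₁ ::ₘ s₂ ::ₘ rest ∧ s₁.head? = some g ∧ s₂.head? = some g) :
    (∀ s ∈ B, s.length = 2) ∧
    (∀ g : G, tileCount B g ≠ 0 → tileCount B g = 2) := by
  classical
  obtain ⟨s₀, hs₀⟩ := Multiset.exists_mem_of_ne_zero hne
  letI : Inhabited G := ⟨s₀.head (hH s₀ hs₀).1⟩
  set n := Multiset.card B with hn
  set All : Multiset G := B.bind (fun s => (s : Multiset G)) with hAll
  have htc : ∀ g, tileCount B g = All.count g := by
    intro g; simp [tileCount, hAll, Multiset.count_bind]
  have htt : totalTiles B = Multiset.card All := by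
    simp [totalTiles, hAll, Multiset.card_bind, Function.comp_def]
  have hhead : ∀ s ∈ B, s.head? = some s.headI := by
    intro s hs'
    cases s with
    | nil => exact absurd rfl (hH _ hs').1
    | cons a t => rfl
  set Hd : Multiset G := B.map List.headI with hHd
  have hnodup : Hd.Nodup := by
    rw [Multiset.nodup_iff_count_le_one]
    intro g
    by_contra hcon
    push_neg at hcon
    rw [hHd, Multiset.count_map] at hcon
    set M := Multiset.filter (fun s => g = s.headI) B with hM
    have h2 : 2 ≤ Multiset.card M := hcon
    obtain ⟨s₁, hs1⟩ := Multiset.card_pos_iff_exists_mem.mp (show 0 < Multiset.card M by omega)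
    obtain ⟨M', hM'⟩ := Multiset.exists_cons_of_mem hs1
    have h1 : 0 < Multiset.card M' := by
      rw [hM', Multiset.card_cons] at h2; omega
    obtain ⟨s₂, hs2⟩ := Multiset.card_pos_iff_exists_mem.mp (show 0 < Multiset.card M' from h1)
    obtain ⟨M'', hM''⟩ := Multiset.exists_cons_of_mem hs2
    have hle : s₁ ::ₘ s₂ ::ₘ M'' ≤ B := by
      rw [← hM'', ← hM', hM]; exact Multiset.filter_le _ B
    obtain ⟨rest, hrest⟩ := Multiset.le_iff_exists_add.mp hle
    have hm1 := Multiset.mem_filter.mp (hM ▸ hs1)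
    have hm2 : s₂ ∈ M := by rw [hM']; exact Multiset.mem_cons_of_mem hs2
    have hm2' := Multiset.mem_filter.mp (hM ▸ hm2)
    refine hnm ⟨g, s₁, s₂, M'' + rest, ?_, ?_, ?_⟩
    · rw [hrest]; simp [Multiset.cons_add]
    · rw [hhead s₁ hm1.1, ← hm1.2]
    · rw [hhead s₂ hm2'.1, ← hm2'.2]
  set Fh : Finset G := Hd.toFinset with hFh
  have hcardFh : Fh.card = n := by
    rw [hFh, Multiset.toFinset_card_of_nodup hnodup, hHd, Multiset.card_map]
  have hmemAll : ∀ g ∈ Fh, g ∈ All := by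
    intro g hg
    obtain ⟨s, hsB, hgs⟩ := Multiset.mem_map.mp (Multiset.mem_toFinset.mp hg)
    refine Multiset.mem_bind.mpr ⟨s, hsB, ?_⟩
    cases s with
    | nil => exact absurd rfl (hH _ hsB).1
    | cons a t => subst hgs; simp [List.headI]
  have hge2 : ∀ g ∈ Fh, 2 ≤ All.count g := by
    intro g hg
    have h1 : 1 ≤ All.count g := Multiset.one_le_count_iff_mem.mpr (hmemAll g hg)
    rcases hs g with h | h | h <;> rw [htc g] at h <;> omega
  have hsub : Fh ⊆ All.toFinset := fun g hg => Multiset.mem_toFinset.mpr (hmemAll g hg)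
  have e1 : ∑ g ∈ All.toFinset, All.count g = Multiset.card All :=
    Multiset.toFinset_sum_count_eq All
  have le1 : Multiset.card All ≤ 2 * n := by
    have h := Multiset.sum_le_card_nsmul (B.map List.length) 2 (by
      intro x hx
      obtain ⟨s, hsB, rfl⟩ := Multiset.mem_map.mp hx
      exact (hH s hsB).2)
    rw [← htt] at *
    simp only [Multiset.card_map, smul_eq_mul] at h
    unfold totalTiles
    omega
  have le2 : 2 * n ≤ ∑ g ∈ Fh, All.count g := by
    calc 2 * n = ∑ _g ∈ Fh, 2 := by rw [Finset.sum_const, hcardFh, smul_eq_mul, mul_comm]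
    _ ≤ ∑ g ∈ Fh, All.count g := Finset.sum_le_sum hge2
  have le3 : ∑ g ∈ Fh, All.count g ≤ ∑ g ∈ All.toFinset, All.count g :=
    Finset.sum_le_sum_of_subset hsub
  have keyA : ∑ g ∈ All.toFinset, All.count g = 2 * n := by omega
  have keyF : ∑ g ∈ Fh, All.count g = 2 * n := by omega
  have keyC : Multiset.card All = 2 * n := by omega
  constructor
  · intro s hsB
    have hlen := sum_eq_two_mul_aux (B.map List.length)
      (by intro x hx
          obtain ⟨t, htB, rfl⟩ := Multiset.mem_map.mp hx
          exact (hH t htB).2)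
      (by have := htt; unfold totalTiles at this
          rw [this, keyC, Multiset.card_map])
    exact hlen s.length (Multiset.mem_map_of_mem _ hsB)
  · intro g hg
    rw [htc g] at hg
    have hgA : g ∈ All.toFinset := Multiset.mem_toFinset.mpr (by
      exact Multiset.count_pos.mp (Nat.pos_of_ne_zero hg))
    have hgF : g ∈ Fh := by
      by_contra hgF
      have hsd : ∑ g ∈ All.toFinset \ Fh, All.count g + ∑ g ∈ Fh, All.count g
          = ∑ g ∈ All.toFinset, All.count g := Finset.sum_sdiff hsub
      have hz : ∑ g ∈ All.toFinset \ Fh, All.count g = 0 := by omega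
      have : All.count g = 0 :=
        Finset.sum_eq_zero_iff.mp hz g (Finset.mem_sdiff.mpr ⟨hgA, hgF⟩)
      exact hg this
    rcases hs g with h | h | h
    · exact absurd (htc g ▸ h) hg
    · exact h
    · exfalso
      have hlt : ∑ _g ∈ Fh, 2 < ∑ g ∈ Fh, All.count g :=
        Finset.sum_lt_sum hge2 ⟨g, hgF, by rw [← htc g, h]; omega⟩
      rw [Finset.sum_const, hcardFh, smul_eq_mul] at hlt
      omega
end

section
/- On a nonempty board where every stack has height exactly two and every group has exactly two tiles, if no match exists (no group has both tiles playable), then the set of stacks decomposes into disjoint blocked cycles: the function sending each group to the group of the tile lying above its bottom tile is a well-defined permutation of the groups, and every group lies on a cycle of this permutation, each cycle being a blocked cycle. -/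
variable {G : Type*} [DecidableEq G]

lemma exists_two_of_two_le_countP {α : Type*} {p : α → Prop} [DecidablePred p]
    {B : Multiset α} (h : 2 ≤ Multiset.countP p B) :
    ∃ s₁ s₂ rest, B = s₁ ::ₘ s₂ ::ₘ rest ∧ p s₁ ∧ p s₂ := by
  rw [Multiset.countP_eq_card_filter] at h
  have h1 : ∃ a, a ∈ B.filter p := by
    rw [← Multiset.card_pos_iff_exists_mem]; omega
  obtain ⟨a, ha⟩ := h1
  obtain ⟨F, hF⟩ := Multiset.exists_cons_of_mem ha
  have h2 : ∃ b, b ∈ F := by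
    rw [← Multiset.card_pos_iff_exists_mem]
    have := hF ▸ h; simp at this; omega
  obtain ⟨b, hb⟩ := h2
  obtain ⟨F', hF'⟩ := Multiset.exists_cons_of_mem hb
  have hpa : p a := (Multiset.mem_filter.mp ha).2
  have hpb : p b := by
    have : b ∈ B.filter p := by rw [hF, hF']; simp
    exact (Multiset.mem_filter.mp this).2
  have hle : (a ::ₘ b ::ₘ F') ≤ B := by
    rw [← hF', ← hF]; exact Multiset.filter_le p B
  obtain ⟨u, hu⟩ := Multiset.le_iff_exists_add.mp hle
  exact ⟨a, b, F' + u, by rw [hu]; simp [Multiset.cons_add], hpa, hpb⟩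

lemma two_le_countP_of_ne {α : Type*} [DecidableEq α] {p : α → Prop} [DecidablePred p]
    {B : Multiset α} {a b : α} (hab : a ≠ b) (ha : a ∈ B) (hb : b ∈ B)
    (hpa : p a) (hpb : p b) : 2 ≤ Multiset.countP p B := by
  rw [Multiset.countP_eq_card_filter]
  have ha' : a ∈ B.filter p := Multiset.mem_filter.mpr ⟨ha, hpa⟩
  have hb' : b ∈ (B.filter p).erase a :=
    (Multiset.mem_erase_of_ne (Ne.symm hab)).mpr (Multiset.mem_filter.mpr ⟨hb, hpb⟩)
  have h1 : 0 < Multiset.card ((B.filter p).erase a) :=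
    Multiset.card_pos_iff_exists_mem.mpr ⟨b, hb'⟩
  have h2 := Multiset.card_erase_add_one ha'
  omega

lemma tileCount_split {G : Type*} [DecidableEq G] (B : Board G)
    (hsh : ∀ s ∈ B, ∃ a b : G, s = [a, b]) (g : G) :
    tileCount B g = Multiset.countP (fun s => s.head? = some g) B
      + Multiset.countP (fun s => s.tail.head? = some g) B := by
  induction B using Multiset.induction with
  | empty => simp [tileCount]
  | cons s B ih =>
    obtain ⟨a, b, rfl⟩ := hsh s (by simp)
    rw [show tileCount ([a,b] ::ₘ B) g = [a,b].count g + tileCount B g by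
      simp [tileCount]]
    rw [ih (fun t ht => hsh t (by simp [ht]))]
    simp only [Multiset.countP_cons]
    have : [a,b].count g = (if a = g then 1 else 0) + (if b = g then 1 else 0) := by
      by_cases hag : a = g <;> by_cases hbg : b = g <;> simp [hag, hbg, List.count_cons]
    rw [this]
    by_cases hag : a = g <;> by_cases hbg : b = g <;> simp [hag, hbg] <;> omega

/-- on a nonempty matchless board of height-two stacks with all
groups of size two, the map sending each group to the group lying above its
bottom tile is a well-defined injective map, and every group lies on a blocked
cycle. -/
theorem stmt7 (B : Board G) (hne : B ≠ 0)
    (hH2 : ∀ s ∈ B, s.length = 2)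
    (h2 : ∀ g : G, tileCount B g ≠ 0 → tileCount B g = 2)
    (hnm : ¬ ∃ (g : G) (s₁ s₂ : List G) (rest : Board G),
      B = s₁ ::ₘ s₂ ::ₘ rest ∧ s₁.head? = some g ∧ s₂.head? = some g) :
    (∀ g : G, tileCount B g ≠ 0 → ∃! g' : G, [g', g] ∈ B) ∧
    (∀ g₁ g₂ g' : G, [g', g₁] ∈ B → [g', g₂] ∈ B → g₁ = g₂) ∧
    (∀ g : G, tileCount B g ≠ 0 →
      ∃ (k : ℕ) (p : Fin (k + 1) → G), BlockedCycle B p ∧ ∃ i, p i = g) := by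
  classical
  have hshape : ∀ s ∈ B, ∃ a b : G, s = [a, b] := fun s hs =>
    List.length_eq_two.mp (hH2 s hs)
  set topC : G → ℕ := fun g => Multiset.countP (fun s => s.head? = some g) B with htopC
  set botC : G → ℕ := fun g => Multiset.countP (fun s => s.tail.head? = some g) B with hbotC
  -- no match means each group tops at most one stack
  have htop1 : ∀ g, topC g ≤ 1 := by
    intro g
    by_contra hgt
    push_neg at hgt
    obtain ⟨s₁, s₂, rest, hB, hp1, hp2⟩ := exists_two_of_two_le_countP hgt
    exact hnm ⟨g, s₁, s₂, rest, hB, hp1, hp2⟩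
  have hsum : ∀ g, tileCount B g = topC g + botC g := fun g => tileCount_split B hshape g
  -- the multiset of tops equals the multiset of bottoms
  have heads_eq : B.map (fun s => s.head?) = B.map (fun s => s.tail.head?) := by
    apply Multiset.eq_of_le_of_card_le
    · rw [Multiset.le_iff_count]
      intro x
      match x with
      | none =>
        have : Multiset.count none (B.map fun s => s.head?) = 0 := by
          simp only [Multiset.count_eq_zero, Multiset.mem_map]
          rintro ⟨s, hs, hh⟩
          obtain ⟨a, b, rfl⟩ := hshape s hs
          simp at hh
        simp [this]
      | some g =>
        have hct : ∀ f : List G → Option G,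
            Multiset.count (some g) (B.map f) = Multiset.countP (fun s => f s = some g) B := by
          intro f
          rw [Multiset.count_map, Multiset.countP_eq_card_filter]
          congr 1
          apply Multiset.filter_congr
          intro s _
          exact eq_comm
        rw [hct, hct]
        show topC g ≤ botC g
        by_cases h0 : tileCount B g = 0
        · have := hsum g; omega
        · have := h2 g h0; have := hsum g; have := htop1 g; omega
    · simp
  have hcount_eq : ∀ g, topC g = botC g := by
    intro g
    have hct : ∀ f : List G → Option G,
        Multiset.count (some g) (B.map f) = Multiset.countP (fun s => f s = some g) B := by
      intro f
      rw [Multiset.count_map, Multiset.countP_eq_card_filter]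
      congr 1
      apply Multiset.filter_congr
      intro s _
      exact eq_comm
    have := congrArg (Multiset.count (some g)) heads_eq
    rwa [hct, hct] at this
  have htb1 : ∀ g, tileCount B g ≠ 0 → topC g = 1 ∧ botC g = 1 := by
    intro g h0
    have := h2 g h0; have := hsum g; have := htop1 g; have := hcount_eq g
    omega
  -- claim 2
  have claim2 : ∀ g₁ g₂ g' : G, [g', g₁] ∈ B → [g', g₂] ∈ B → g₁ = g₂ := by
    intro g₁ g₂ g' h₁ h₂
    by_contra hne'
    have hll : [g', g₁] ≠ [g', g₂] := by simp [hne']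
    have hge : 2 ≤ topC g' := two_le_countP_of_ne (p := fun s => s.head? = some g') hll h₁ h₂
      (by simp) (by simp)
    have := htop1 g'
    omega
  -- claim 1
  have claim1 : ∀ g : G, tileCount B g ≠ 0 → ∃! g' : G, [g', g] ∈ B := by
    intro g h0
    obtain ⟨_, hb1⟩ := htb1 g h0
    have hpos : 0 < botC g := by omega
    obtain ⟨s, hs, hps⟩ := Multiset.countP_pos.mp hpos
    obtain ⟨a, b, rfl⟩ := hshape s hs
    simp at hps
    have hs' : [a, g] ∈ B := by rwa [hps] at hs
    refine ⟨a, hs', ?_⟩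
    intro c hc
    by_contra hca
    have hll : [c, g] ≠ [a, g] := by simp [hca]
    have hge : 2 ≤ botC g := two_le_countP_of_ne (p := fun s => s.tail.head? = some g) hll hc hs'
      (by simp) (by simp)
    omega
  refine ⟨claim1, claim2, ?_⟩
  -- claim 3: cycles
  intro g hg0
  have hex : ∀ x, tileCount B x ≠ 0 → ∃ x', [x', x] ∈ B := by
    intro x hx
    obtain ⟨x', hx', _⟩ := claim1 x hx
    exact ⟨x', hx'⟩
  set f : G → G := fun x => if h : tileCount B x ≠ 0 then (hex x h).choose else x with hf
  have hfmem : ∀ x, tileCount B x ≠ 0 → [f x, x] ∈ B := by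
    intro x hx
    rw [hf]
    simp only [dif_pos hx]
    exact (hex x hx).choose_spec
  have hmem_count : ∀ s ∈ B, ∀ x ∈ s, tileCount B x ≠ 0 := by
    intro s hs x hx h0
    have hmm : s.count x ∈ B.map (fun t => t.count x) := Multiset.mem_map_of_mem _ hs
    have := Multiset.single_le_sum (fun y _ => Nat.zero_le y) _ hmm
    have hcp : 0 < s.count x := List.count_pos_iff.mpr hx
    rw [show (B.map (fun t => t.count x)).sum = tileCount B x from rfl] at this
    omega
  have hfsupp : ∀ x, tileCount B x ≠ 0 → tileCount B (f x) ≠ 0 := by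
    intro x hx
    exact hmem_count _ (hfmem x hx) (f x) (by simp)
  have hiter : ∀ n, tileCount B (f^[n] g) ≠ 0 := by
    intro n
    induction n with
    | zero => simpa
    | succ n ih => rw [Function.iterate_succ_apply']; exact hfsupp _ ih
  have hinj : ∀ x y, tileCount B x ≠ 0 → tileCount B y ≠ 0 → f x = f y → x = y := by
    intro x y hx hy hxy
    exact claim2 x y (f x) (hfmem x hx) (hxy ▸ hfmem y hy)
  -- cancellation
  have hcancel : ∀ m n, m ≤ n → f^[m] g = f^[n] g → g = f^[n - m] g := by
    intro m
    induction m with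
    | zero => intro n _ h; simpa using h
    | succ m ih =>
      intro n hmn h
      obtain ⟨n', rfl⟩ : ∃ n', n = n' + 1 := ⟨n - 1, by omega⟩
      rw [Function.iterate_succ_apply', Function.iterate_succ_apply'] at h
      have := hinj _ _ (hiter m) (hiter n') h
      have := ih n' (by omega) this
      simpa using this
  -- pigeonhole
  have hfinite : ∃ d, 0 < d ∧ f^[d] g = g := by
    set S : Finset G := B.toList.flatten.toFinset with hS
    have hmemS : ∀ x, tileCount B x ≠ 0 → x ∈ S := by
      intro x hx
      have : ∃ s ∈ B, x ∈ s := by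
        by_contra hno
        push_neg at hno
        apply hx
        rw [show tileCount B x = (B.map (fun t => t.count x)).sum from rfl]
        apply Multiset.sum_eq_zero
        intro c hc
        obtain ⟨s, hs, rfl⟩ := Multiset.mem_map.mp hc
        simp only [List.count_eq_zero]
        exact hno s hs
      obtain ⟨s, hs, hxs⟩ := this
      rw [hS]
      simp only [List.mem_toFinset, List.mem_flatten]
      exact ⟨s, by rwa [Multiset.mem_toList], hxs⟩
    have : ∃ m n : ℕ, m ≠ n ∧ (⟨f^[m] g, hmemS _ (hiter m)⟩ : S) = ⟨f^[n] g, hmemS _ (hiter n)⟩ := by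
      obtain ⟨m, n, hmn, h⟩ := Finite.exists_ne_map_eq_of_infinite
        (fun n : ℕ => (⟨f^[n] g, hmemS _ (hiter n)⟩ : S))
      exact ⟨m, n, hmn, h⟩
    obtain ⟨m, n, hmn, h⟩ := this
    have heq : f^[m] g = f^[n] g := congrArg Subtype.val h
    rcases Nat.lt_or_ge m n with hlt | hge
    · exact ⟨n - m, by omega, (hcancel m n (by omega) heq).symm⟩
    · exact ⟨m - n, by omega, (hcancel n m (by omega) heq.symm).symm⟩
  -- least period
  have hP : ∃ d, 0 < d ∧ f^[d] g = g := hfinite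
  set m₀ := Nat.find hP with hm₀
  obtain ⟨hm₀pos, hm₀fix⟩ := Nat.find_spec hP
  set k := m₀ - 1 with hk
  have hkm : m₀ = k + 1 := by omega
  refine ⟨k, fun i => f^[i.val] g, ⟨?_, ?_, ?_⟩, ⟨0, by simp⟩⟩
  · -- injective
    have key : ∀ i j : Fin (k + 1), i.val ≤ j.val → f^[i.val] g = f^[j.val] g → i = j := by
      intro i j hle hij
      have hcan := hcancel i.val j.val hle hij
      have hjk : j.val - i.val < m₀ := by
        have := j.isLt; omega
      have hnot : ¬ (0 < j.val - i.val) := by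
        intro hpos
        exact Nat.find_min hP hjk ⟨hpos, hcan.symm⟩
      exact Fin.ext (by omega)
    intro i j hij
    simp only at hij
    rcases Nat.le_total i.val j.val with hle | hle
    · exact key i j hle hij
    · exact (key j i hle hij.symm).symm
  · intro i
    exact h2 _ (hiter i.val)
  · intro i
    have hnext : f^[(i + 1 : Fin (k+1)).val] g = f (f^[i.val] g) := by
      rcases Nat.lt_or_ge i.val k with hlt | hge
      · have : (i + 1 : Fin (k+1)).val = i.val + 1 := by
          apply Fin.val_add_one_of_lt
          exact Fin.lt_last_iff_ne_last.mpr (by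
            intro h
            rw [h] at hlt
            simp [Fin.last] at hlt)
        rw [this, Function.iterate_succ_apply']
      · have hik : i.val = k := by have := i.isLt; omega
        have hi : i = Fin.last k := Fin.ext (by simpa [Fin.last] using hik)
        rw [hi]
        have : (Fin.last k + 1 : Fin (k+1)) = 0 := by
          apply Fin.ext
          simp [Fin.last, Fin.add_def]
        rw [this]
        show f^[0] g = f (f^[(Fin.last k).val] g)
        calc f^[0] g = g := rfl
          _ = f^[m₀] g := hm₀fix.symm
          _ = f^[k + 1] g := by rw [hkm]
          _ = f (f^[k] g) := Function.iterate_succ_apply' f k g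
          _ = f (f^[(Fin.last k).val] g) := by simp
    simp only [hnext]
    exact hfmem _ (hiter i.val)
end

section
/- Moves of different groups commute: if on a board B two matches m1 (of group g1) and m2 (of group g2) with g1 ≠ g2 are both playable, then m2 is still playable after playing m1, m1 is still playable after playing m2, and playing them in either order yields the same board. -/
variable {G : Type*} [DecidableEq G]

lemma play_cons_cons (a b s₁ s₂ : List G) (rest : Board G)
    (ha : a ≠ []) (hb : b ≠ []) :
    play s₁ s₂ (a ::ₘ b ::ₘ rest) = a ::ₘ b ::ₘ play s₁ s₂ rest := by
  unfold play
  rw [show (s₁.tail ::ₘ s₂.tail ::ₘ a ::ₘ b ::ₘ rest)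
      = a ::ₘ b ::ₘ s₁.tail ::ₘ s₂.tail ::ₘ rest by
    rw [Multiset.cons_swap s₂.tail, Multiset.cons_swap s₁.tail,
        Multiset.cons_swap s₂.tail, Multiset.cons_swap s₁.tail]]
  simp [Multiset.filter_cons, ha, hb]

lemma play_play (s₁ s₂ t₁ t₂ : List G) (rest : Board G) :
    play t₁ t₂ (play s₁ s₂ rest) = play s₁ s₂ (play t₁ t₂ rest) := by
  simp only [play, Multiset.filter_cons, Multiset.filter_filter, and_self,
    Multiset.filter_add, Multiset.filter_singleton, Multiset.filter_zero]
  split_ifs <;> simp [Multiset.filter_singleton, *, ← Multiset.singleton_add] <;> abel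

/-- matches of different groups commute: after playing the
`g₁`-match, the `g₂`-match is still playable (and vice versa), and playing the
two matches in either order yields the same board. -/
theorem stmt11 (B : Board G) (hH : HeightsOK B) (g₁ g₂ : G) (hne : g₁ ≠ g₂)
    (s₁ s₂ t₁ t₂ : List G) (rest : Board G)
    (hB : B = s₁ ::ₘ s₂ ::ₘ t₁ ::ₘ t₂ ::ₘ rest)
    (hs₁ : s₁.head? = some g₁) (hs₂ : s₂.head? = some g₁)
    (ht₁ : t₁.head? = some g₂) (ht₂ : t₂.head? = some g₂) :
    (∃ r : Board G, play s₁ s₂ (t₁ ::ₘ t₂ ::ₘ rest) = t₁ ::ₘ t₂ ::ₘ r) ∧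
    (∃ r' : Board G, play t₁ t₂ (s₁ ::ₘ s₂ ::ₘ rest) = s₁ ::ₘ s₂ ::ₘ r') ∧
    (∀ r r' : Board G, play s₁ s₂ (t₁ ::ₘ t₂ ::ₘ rest) = t₁ ::ₘ t₂ ::ₘ r →
      play t₁ t₂ (s₁ ::ₘ s₂ ::ₘ rest) = s₁ ::ₘ s₂ ::ₘ r' →
      play t₁ t₂ r = play s₁ s₂ r') := by
  have hs₁n : s₁ ≠ [] := by rintro rfl; simp at hs₁
  have hs₂n : s₂ ≠ [] := by rintro rfl; simp at hs₂
  have ht₁n : t₁ ≠ [] := by rintro rfl; simp at ht₁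
  have ht₂n : t₂ ≠ [] := by rintro rfl; simp at ht₂
  have h1 : play s₁ s₂ (t₁ ::ₘ t₂ ::ₘ rest) = t₁ ::ₘ t₂ ::ₘ play s₁ s₂ rest :=
    play_cons_cons _ _ _ _ _ ht₁n ht₂n
  have h2 : play t₁ t₂ (s₁ ::ₘ s₂ ::ₘ rest) = s₁ ::ₘ s₂ ::ₘ play t₁ t₂ rest :=
    play_cons_cons _ _ _ _ _ hs₁n hs₂n
  refine ⟨⟨_, h1⟩, ⟨_, h2⟩, ?_⟩
  intro r r' hr hr'
  rw [h1] at hr; rw [h2] at hr'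
  have hr2 : r = play s₁ s₂ rest := by
    have := hr.symm
    rwa [Multiset.cons_inj_right, Multiset.cons_inj_right] at this
  have hr2' : r' = play t₁ t₂ rest := by
    have := hr'.symm
    rwa [Multiset.cons_inj_right, Multiset.cons_inj_right] at this
  rw [hr2, hr2', play_play]
end

section
/- Commuting moves preserve solvability order-independently: if matches m1 and m2 belong to different groups and are both playable on board B, then the board obtained after playing m1 then m2 is solvable if and only if the board obtained after playing m2 then m1 is solvable. -/
variable {G : Type*} [DecidableEq G]

/-- playing two matches of distinct groups in either order yields
boards that are equi-solvable. -/
theorem stmt12 (B : Board G) (hH : HeightsOK B) (g₁ g₂ : G) (hne : g₁ ≠ g₂)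
    (s₁ s₂ t₁ t₂ : List G) (rest : Board G)
    (hB : B = s₁ ::ₘ s₂ ::ₘ t₁ ::ₘ t₂ ::ₘ rest)
    (hs₁ : s₁.head? = some g₁) (hs₂ : s₂.head? = some g₁)
    (ht₁ : t₁.head? = some g₂) (ht₂ : t₂.head? = some g₂) :
    ∀ r r' : Board G, play s₁ s₂ (t₁ ::ₘ t₂ ::ₘ rest) = t₁ ::ₘ t₂ ::ₘ r →
      play t₁ t₂ (s₁ ::ₘ s₂ ::ₘ rest) = s₁ ::ₘ s₂ ::ₘ r' →
      (Solvable (play t₁ t₂ r) ↔ Solvable (play s₁ s₂ r')) := by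
  intro r r' h1 h2
  classical
  have hs₁' : s₁ ≠ [] := by rintro rfl; simp at hs₁
  have hs₂' : s₂ ≠ [] := by rintro rfl; simp at hs₂
  have ht₁' : t₁ ≠ [] := by rintro rfl; simp at ht₁
  have ht₂' : t₂ ≠ [] := by rintro rfl; simp at ht₂
  set P : List G → Prop := fun s => s ≠ [] with hP
  have perm1 : (s₁.tail ::ₘ s₂.tail ::ₘ t₁ ::ₘ t₂ ::ₘ rest)
      = t₁ ::ₘ t₂ ::ₘ s₁.tail ::ₘ s₂.tail ::ₘ rest := by
    rw [Multiset.cons_swap s₂.tail t₁, Multiset.cons_swap s₁.tail t₁,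
      Multiset.cons_swap s₂.tail t₂, Multiset.cons_swap s₁.tail t₂]
  have perm2 : (t₁.tail ::ₘ t₂.tail ::ₘ s₁ ::ₘ s₂ ::ₘ rest)
      = s₁ ::ₘ s₂ ::ₘ t₁.tail ::ₘ t₂.tail ::ₘ rest := by
    rw [Multiset.cons_swap t₂.tail s₁, Multiset.cons_swap t₁.tail s₁,
      Multiset.cons_swap t₂.tail s₂, Multiset.cons_swap t₁.tail s₂]
  have hr : r = Multiset.filter P (s₁.tail ::ₘ s₂.tail ::ₘ rest) := by
    have : play s₁ s₂ (t₁ ::ₘ t₂ ::ₘ rest)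
        = t₁ ::ₘ t₂ ::ₘ Multiset.filter P (s₁.tail ::ₘ s₂.tail ::ₘ rest) := by
      rw [play, perm1]
      simp [P, Multiset.filter_cons, ht₁', ht₂']
    rw [this] at h1
    exact ((Multiset.cons_inj_right _).mp ((Multiset.cons_inj_right _).mp h1)).symm
  have hr' : r' = Multiset.filter P (t₁.tail ::ₘ t₂.tail ::ₘ rest) := by
    have : play t₁ t₂ (s₁ ::ₘ s₂ ::ₘ rest)
        = s₁ ::ₘ s₂ ::ₘ Multiset.filter P (t₁.tail ::ₘ t₂.tail ::ₘ rest) := by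
      rw [play, perm2]
      simp [P, Multiset.filter_cons, hs₁', hs₂']
    rw [this] at h2
    exact ((Multiset.cons_inj_right _).mp ((Multiset.cons_inj_right _).mp h2)).symm
  have hfil : ∀ (a b : List G) (m : Multiset (List G)),
      Multiset.filter P (a ::ₘ b ::ₘ Multiset.filter P m)
        = Multiset.filter P (a ::ₘ b ::ₘ m) := by
    intro a b m
    simp [Multiset.filter_cons, Multiset.filter_filter, and_self]
  have key : play t₁ t₂ r = play s₁ s₂ r' := by
    rw [hr, hr', play, play, hfil, hfil]
    congr 1
    rw [Multiset.cons_swap s₂.tail t₁.tail, Multiset.cons_swap s₁.tail t₁.tail,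
      Multiset.cons_swap s₂.tail t₂.tail, Multiset.cons_swap s₁.tail t₂.tail]
  rw [key]
end
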